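/- If the graph of σ is strongly connected, the weighted variance V_v(t) = ∑_i v_i (y_i(t) - m)², with m = ∑_i v_i y_i(0), is nonincreasing along any solution of y' = Ay, and strictly decreasing as long as y(t) is not a multiple of e. -/

import Mathlib

open Matrix Finset

theorem weighted_variance_decreasing (N : ℕ) (σ A : Matrix (Fin N) (Fin N) ℝ)
    (hσ : ∀ i j, i ≠ j → 0 ≤ σ i j)
    (hoff : ∀ i j, i ≠ j → A i j = σ i j)
    (hdiag : ∀ i, A i i = -∑ k ∈ Finset.univ.filter (fun k => k ≠ i), σ i k)
    (hconn : ∀ i j : Fin N, i ≠ j → Relation.TransGen (fun a b => 0 < σ a b) i j)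
    (v : Fin N → ℝ) (hvpos : ∀ i, 0 < v i) (hvsum : ∑ i, v i = 1)
    (hv : Aᵀ.mulVec v = 0)
    (y : ℝ → Fin N → ℝ)
    (hy : ∀ t : ℝ, HasDerivAt y (A.mulVec (y t)) t)
    (m : ℝ) (hm : m = ∑ i, v i * y 0 i)
    (V : ℝ → ℝ) (hV : ∀ t, V t = ∑ i, v i * (y t i - m) ^ 2) :
    (∀ s t : ℝ, s ≤ t → V t ≤ V s) ∧
    (∀ t : ℝ, (¬ ∃ c : ℝ, y t = fun _ => c) → ∀ s : ℝ, t < s → V s < V t) := by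
  classical
  -- off-diagonal matrix B
  set B : Matrix (Fin N) (Fin N) ℝ := fun i j => if i = j then 0 else σ i j with hBdef
  have hBnn : ∀ i j, 0 ≤ B i j := by
    intro i j
    by_cases h : i = j
    · simp [hBdef, h]
    · simp [hBdef, h, hσ i j h]
  have hdiagB : ∀ i, A i i = -∑ k, B i k := by
    intro i
    rw [hdiag i]
    congr 1
    rw [Finset.sum_filter]
    refine Finset.sum_congr rfl fun k _ => ?_
    by_cases h : i = k
    · simp [hBdef, h]
    · simp [hBdef, h, Ne.symm h]
  -- A x in terms of B
  have hmul : ∀ (x : Fin N → ℝ) i, A.mulVec x i = ∑ j, B i j * (x j - x i) := by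
    intro x i
    have h1 : ∀ j, A i j * x j = B i j * x j + (if j = i then A i i * x i else 0) := by
      intro j
      by_cases h : j = i
      · subst h; simp [hBdef]
      · have hij : ¬ i = j := fun hh => h hh.symm
        simp [h, hij, hoff i j hij, hBdef]
    have : A.mulVec x i = ∑ j, (B i j * x j + (if j = i then A i i * x i else 0)) := by
      simp only [Matrix.mulVec, dotProduct]
      exact Finset.sum_congr rfl fun j _ => h1 j
    rw [this, Finset.sum_add_distrib, Finset.sum_ite_eq' Finset.univ i
      (fun _ => A i i * x i)]
    simp only [Finset.mem_univ, if_true]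
    rw [hdiagB i]
    have : ∑ j, B i j * (x j - x i) = ∑ j, B i j * x j - (∑ j, B i j) * x i := by
      rw [Finset.sum_mul, ← Finset.sum_sub_distrib]
      exact Finset.sum_congr rfl fun j _ => by ring
    rw [this]; ring
  -- stationarity of v
  have hstat : ∀ j, ∑ i, v i * B i j = v j * ∑ k, B j k := by
    intro j
    have h0 : Aᵀ.mulVec v j = 0 := congrFun hv j
    simp only [Matrix.mulVec, dotProduct, Matrix.transpose_apply] at h0
    have h1 : ∀ i, A i j * v i = B i j * v i + (if i = j then A j j * v j else 0) := by
      intro i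
      by_cases h : i = j
      · subst h; simp [hBdef]
      · simp [h, hoff i j h, hBdef]
    rw [show (∑ i, A i j * v i) = ∑ i, (B i j * v i + (if i = j then A j j * v j else 0)) from
      Finset.sum_congr rfl fun i _ => h1 i] at h0
    rw [Finset.sum_add_distrib, Finset.sum_ite_eq' Finset.univ j
      (fun _ => A j j * v j)] at h0
    simp only [Finset.mem_univ, if_true] at h0
    rw [hdiagB j] at h0
    have h2 : ∑ i, v i * B i j = ∑ i, B i j * v i :=
      Finset.sum_congr rfl fun i _ => mul_comm _ _
    rw [h2]
    have hc := mul_comm (v j) (∑ k, B j k)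
    linarith [h0]
  -- the quadratic forms
  set S : (Fin N → ℝ) → ℝ := fun x => ∑ i, ∑ j, v i * B i j * (x j - x i) ^ 2 with hSdef
  have hSnn : ∀ x, 0 ≤ S x := by
    intro x
    refine Finset.sum_nonneg fun i _ => Finset.sum_nonneg fun j _ => ?_
    have h1 := hvpos i
    have h2 := hBnn i j
    positivity
  -- key identity : 2 * ∑ v i x i (A x) i = - S x
  have hkey : ∀ x : Fin N → ℝ, 2 * ∑ i, v i * (x i * A.mulVec x i) = -S x := by
    intro x
    have hQ : ∑ i, v i * (x i * A.mulVec x i)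
        = ∑ i, ∑ j, v i * B i j * (x i * (x j - x i)) := by
      refine Finset.sum_congr rfl fun i _ => ?_
      rw [hmul x i, Finset.mul_sum, Finset.mul_sum]
      exact Finset.sum_congr rfl fun j _ => by ring
    have hTU : (∑ i, ∑ j, v i * B i j * (x j) ^ 2)
        = ∑ i, ∑ j, v i * B i j * (x i) ^ 2 := by
      rw [Finset.sum_comm]
      refine Finset.sum_congr rfl fun j _ => ?_
      have : ∑ i, v i * B i j * x j ^ 2 = (∑ i, v i * B i j) * x j ^ 2 := by
        rw [Finset.sum_mul]
      rw [this, hstat j, Finset.mul_sum, Finset.sum_mul]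
    have hmain : S x + 2 * (∑ i, ∑ j, v i * B i j * (x i * (x j - x i)))
        = (∑ i, ∑ j, v i * B i j * (x j) ^ 2) - ∑ i, ∑ j, v i * B i j * (x i) ^ 2 := by
      rw [hSdef]
      simp only [Finset.mul_sum, ← Finset.sum_add_distrib, ← Finset.sum_sub_distrib]
      refine Finset.sum_congr rfl fun i _ => Finset.sum_congr rfl fun j _ => by ring
    rw [hQ]
    rw [hTU, sub_self] at hmain
    linarith
  -- derivative of components
  have hyc : ∀ (t : ℝ) i, HasDerivAt (fun s => y s i) (A.mulVec (y t) i) t := by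
    intro t i
    have h := (hy t).hasFDerivAt
    have h2 := (ContinuousLinearMap.proj (R := ℝ) (φ := fun _ : Fin N => ℝ) i).hasFDerivAt.comp t h
    have h3 := h2.hasDerivAt
    exact hasDerivAt_pi.mp (hy t) i
  -- shift invariance
  have hshift : ∀ t i, A.mulVec (y t) i = A.mulVec (fun k => y t k - m) i := by
    intro t i
    rw [hmul, hmul]
    exact Finset.sum_congr rfl fun j _ => by ring
  -- derivative of V
  have hVd : ∀ t, HasDerivAt V (-(S (fun k => y t k - m))) t := by
    intro t
    have hVeq : V = fun t => ∑ i, v i * (y t i - m) ^ 2 := funext hV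
    rw [hVeq]
    have h : HasDerivAt (fun t => ∑ i, v i * (y t i - m) ^ 2)
        (∑ i, v i * (2 * (y t i - m) ^ 1 * A.mulVec (y t) i)) t := by
      refine HasDerivAt.fun_sum fun i _ => ?_
      exact (((hyc t i).sub_const m).pow 2).const_mul (v i)
    convert h using 1
    have : (∑ i, v i * (2 * (y t i - m) ^ 1 * A.mulVec (y t) i))
        = 2 * ∑ i, v i * ((y t i - m) * A.mulVec (fun k => y t k - m) i) := by
      rw [Finset.mul_sum]
      refine Finset.sum_congr rfl fun i _ => ?_
      rw [← hshift t i]; ring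
    rw [this, hkey (fun k => y t k - m)]
  have hVdiff : Differentiable ℝ V := fun t => (hVd t).differentiableAt
  -- part 1 : antitone
  have hanti : Antitone V := by
    refine antitone_of_deriv_nonpos hVdiff fun t => ?_
    rw [(hVd t).deriv]
    simp [hSnn]
  -- conservation of the mean
  have hWzero : ∀ z : Fin N → ℝ, ∑ i, v i * A.mulVec z i = 0 := by
    intro z
    simp only [Matrix.mulVec, dotProduct, Finset.mul_sum]
    rw [Finset.sum_comm]
    refine Finset.sum_eq_zero fun j _ => ?_
    have h0 : Aᵀ.mulVec v j = 0 := congrFun hv j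
    simp only [Matrix.mulVec, dotProduct, Matrix.transpose_apply] at h0
    have : ∑ i, v i * (A i j * z j) = (∑ i, A i j * v i) * z j := by
      rw [Finset.sum_mul]
      exact Finset.sum_congr rfl fun i _ => by ring
    rw [this, h0, zero_mul]
  have hWconst : ∀ t, ∑ i, v i * y t i = m := by
    have hWd : ∀ t, HasDerivAt (fun t => ∑ i, v i * y t i) 0 t := by
      intro t
      have h : HasDerivAt (fun t => ∑ i, v i * y t i) (∑ i, v i * A.mulVec (y t) i) t :=
        HasDerivAt.fun_sum fun i _ => (hyc t i).const_mul (v i)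
      rwa [hWzero (y t)] at h
    intro t
    have := is_const_of_deriv_eq_zero (fun u => (hWd u).differentiableAt)
      (fun u => (hWd u).deriv) t 0
    rw [this, hm]
  have hN : 0 < N := by
    rcases Nat.eq_zero_or_pos N with h | h
    · exfalso; subst h; simp at hvsum
    · exact h
  -- V t = 0 iff y t constant
  have hconst_V : ∀ t (c : ℝ), y t = (fun _ => c) → V t = 0 := by
    intro t c hc
    have hcm : c = m := by
      have := hWconst t
      rw [hc] at this
      simp only at this
      rw [← Finset.sum_mul, hvsum, one_mul] at this
      exact this
    rw [hV t, hc, hcm]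
    simp
  have hVzero_const : ∀ t, V t = 0 → y t = (fun _ => m) := by
    intro t h
    rw [hV t] at h
    have hterm := (Finset.sum_eq_zero_iff_of_nonneg (fun i _ => by
      have := hvpos i; positivity)).mp h
    funext i
    have := hterm i (Finset.mem_univ i)
    have hv' := hvpos i
    have : (y t i - m) ^ 2 = 0 := by
      by_contra hne
      have : 0 < (y t i - m) ^ 2 := lt_of_le_of_ne (sq_nonneg _) (Ne.symm hne)
      nlinarith
    have := pow_eq_zero_iff (n := 2) (by norm_num) |>.mp this
    linarith
  refine ⟨fun s t hst => hanti hst, ?_⟩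
  intro t hne s hts
  by_contra hle
  push_neg at hle
  have heq : V s = V t := le_antisymm (hanti hts.le) hle
  set u := (t + s) / 2 with hu
  have htu : t < u := by rw [hu]; linarith
  have hus : u < s := by rw [hu]; linarith
  have hVconst : ∀ w, w ∈ Set.Ioo t s → V w = V t := by
    intro w hw
    refine le_antisymm (hanti hw.1.le) ?_
    calc V t = V s := heq.symm
    _ ≤ V w := hanti hw.2.le
  -- deriv V u = 0
  have hderiv0 : S (fun k => y u k - m) = 0 := by
    have hev : V =ᶠ[nhds u] (fun _ => V t) := by
      filter_upwards [Ioo_mem_nhds htu hus] with w hw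
      exact hVconst w hw
    have h1 : deriv V u = 0 := by
      rw [Filter.EventuallyEq.deriv_eq hev]
      simp
    have h2 := (hVd u).deriv
    rw [h1] at h2
    linarith
  -- all edge-connected components equal
  have hterm : ∀ i j, v i * B i j * ((y u j - m) - (y u i - m)) ^ 2 = 0 := by
    intro i j
    have h1 := (Finset.sum_eq_zero_iff_of_nonneg (fun i _ => Finset.sum_nonneg fun j _ => by
      have ha := hvpos i; have hb := hBnn i j; positivity)).mp hderiv0 i (Finset.mem_univ i)
    have h2 := (Finset.sum_eq_zero_iff_of_nonneg (fun j _ => by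
      have ha := hvpos i; have hb := hBnn i j; positivity)).mp h1 j (Finset.mem_univ j)
    exact h2
  have hrel : ∀ i j : Fin N, 0 < σ i j → y u i = y u j := by
    intro i j hij
    by_cases h : i = j
    · rw [h]
    · have hB : B i j = σ i j := by simp [hBdef, h]
      have := hterm i j
      have hv' := hvpos i
      have hsq : ((y u j - m) - (y u i - m)) ^ 2 = 0 := by
        by_contra hne
        have h0 : 0 < ((y u j - m) - (y u i - m)) ^ 2 :=
          lt_of_le_of_ne (sq_nonneg _) (Ne.symm hne)
        rw [hB] at this
        nlinarith [mul_pos (mul_pos hv' hij) h0]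
      have := pow_eq_zero_iff (n := 2) (by norm_num) |>.mp hsq
      linarith
  have htrans : ∀ i j : Fin N, Relation.TransGen (fun a b => 0 < σ a b) i j → y u i = y u j := by
    intro i j htg
    induction htg with
    | single hb => exact hrel _ _ hb
    | tail _ hbc ih => exact ih.trans (hrel _ _ hbc)
  have hall : ∀ i j : Fin N, y u i = y u j := by
    intro i j
    by_cases h : i = j
    · rw [h]
    · exact htrans i j (hconn i j h)
  -- hence y u constant, V u = 0
  have hyu : y u = fun _ => y u ⟨0, hN⟩ := funext fun j => (hall j ⟨0, hN⟩)
  have hVu : V u = 0 := hconst_V u _ hyu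
  have hVt0 : V t = 0 := by rw [← hVconst u ⟨htu, hus⟩]; exact hVu
  exact hne ⟨m, hVzero_const t hVt0⟩
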